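/- Let F be a nonarchimedean local field with ring of integers O, residue cardinality q, uniformizer p, and Haar measure with vol(O)=1. Let χ and χ' be unramified characters of F^* such that the integrals below converge absolutely. Then 1 + q ∫_{O∖{0,-1}} χ(t)χ'(1+t) dt = (q - 1) · (1 - q^{-2}(χχ')(p)) / ((1 - q^{-1}χ(p))(1 - q^{-1}χ'(p))). -/

import Mathlib

open MeasureTheory

namespace Stmt2Aux

open ENNReal

variable (p : ℕ) [hp : Fact p.Prime]

lemma one_lt_pR : (1:ℝ) < p := by exact_mod_cast hp.out.one_lt

lemma p_posR : (0:ℝ) < p := lt_trans one_pos (one_lt_pR p)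

lemma pQ_ne : (p : ℚ_[p]) ≠ 0 := by
  intro h
  have h1 := Padic.norm_p (p := p)
  rw [h, norm_zero] at h1
  have h2 : (0:ℝ) < (p:ℝ)⁻¹ := inv_pos.mpr (p_posR p)
  linarith

/-- closed ball of radius `p^{-k}` -/
def B (k : ℕ) : Set ℚ_[p] := {t | ‖t‖ ≤ (p:ℝ) ^ (-(k:ℤ))}

/-- sphere of radius `p^{-k}` -/
def S (k : ℕ) : Set ℚ_[p] := {t | ‖t‖ = (p:ℝ) ^ (-(k:ℤ))}

lemma mem_B_iff {k : ℕ} {t : ℚ_[p]} (ht : t ≠ 0) : t ∈ B p k ↔ (k:ℤ) ≤ t.valuation := by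
  rw [B, Set.mem_setOf_eq, Padic.norm_eq_zpow_neg_valuation ht,
    zpow_le_zpow_iff_right₀ (one_lt_pR p), neg_le_neg_iff]

lemma mem_S_iff {k : ℕ} {t : ℚ_[p]} (ht : t ≠ 0) : t ∈ S p k ↔ t.valuation = (k:ℤ) := by
  rw [S, Set.mem_setOf_eq, Padic.norm_eq_zpow_neg_valuation ht]
  constructor
  · intro h
    have := zpow_right_injective₀ (p_posR p) (ne_of_gt (one_lt_pR p)) h
    omega
  · intro h
    rw [h]

lemma zero_mem_B (k : ℕ) : (0:ℚ_[p]) ∈ B p k := by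
  have : (0:ℝ) ≤ (p:ℝ) ^ (-(k:ℤ)) := by positivity
  simpa [B, Set.mem_setOf_eq] using this

lemma ne_zero_of_mem_S {k : ℕ} {t : ℚ_[p]} (ht : t ∈ S p k) : t ≠ 0 := by
  intro h
  rw [S, Set.mem_setOf_eq, h, norm_zero] at ht
  have h2 : (0:ℝ) < (p:ℝ) ^ (-(k:ℤ)) := zpow_pos (p_posR p) _
  rw [← ht] at h2
  exact lt_irrefl _ h2

lemma S_eq (k : ℕ) : S p k = B p k \ B p (k+1) := by
  ext t
  by_cases ht : t = 0
  · subst ht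
    constructor
    · intro h
      exact absurd rfl (ne_zero_of_mem_S p h)
    · intro h
      exact absurd (zero_mem_B p (k+1)) h.2
  · rw [Set.mem_diff, mem_S_iff p ht, mem_B_iff p ht, mem_B_iff p ht]
    omega

lemma measurableSet_B [MeasurableSpace ℚ_[p]] [BorelSpace ℚ_[p]] (k : ℕ) :
    MeasurableSet (B p k) :=
  measurableSet_le measurable_norm measurable_const

lemma measurableSet_S [MeasurableSpace ℚ_[p]] [BorelSpace ℚ_[p]] (k : ℕ) :
    MeasurableSet (S p k) :=
  measurable_norm (measurableSet_singleton _)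


lemma exists_residue {k : ℕ} {x : ℚ_[p]} (hx : x ∈ B p k) :
    ∃ i : ℕ, i < p ∧ x - (i : ℚ_[p]) * (p:ℚ_[p])^k ∈ B p (k+1) := by
  have hpk : ‖((p:ℚ_[p])^k)‖ = (p:ℝ) ^ (-(k:ℤ)) := by
    rw [norm_pow, Padic.norm_p, inv_pow, ← zpow_natCast, ← zpow_neg]
  have hpk0 : ((p:ℚ_[p])^k) ≠ 0 := pow_ne_zero _ (pQ_ne p)
  set y : ℚ_[p] := x / (p:ℚ_[p])^k with hy
  have hy1 : ‖y‖ ≤ 1 := by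
    rw [hy, norm_div, hpk, div_le_one (zpow_pos (p_posR p) _)]
    exact hx
  set z : ℤ_[p] := ⟨y, hy1⟩ with hz
  refine ⟨z.appr 1, by simpa using z.appr_lt 1, ?_⟩
  have hspec := PadicInt.appr_spec 1 z
  rw [← PadicInt.norm_le_pow_iff_mem_span_pow] at hspec
  have hnorm : ‖y - (z.appr 1 : ℚ_[p])‖ ≤ (p:ℝ) ^ (-(1:ℤ)) := by
    have : ((z - (z.appr 1 : ℤ_[p]) : ℤ_[p]) : ℚ_[p]) = y - (z.appr 1 : ℚ_[p]) := by
      rw [PadicInt.coe_sub, PadicInt.coe_natCast]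
    rw [← this, ← PadicInt.norm_def]
    simpa using hspec
  have key : x - (z.appr 1 : ℚ_[p]) * (p:ℚ_[p])^k = (y - (z.appr 1 : ℚ_[p])) * (p:ℚ_[p])^k := by
    rw [hy]
    field_simp
  show ‖x - (z.appr 1 : ℚ_[p]) * (p:ℚ_[p])^k‖ ≤ (p:ℝ) ^ (-((k+1:ℕ):ℤ))
  rw [key, norm_mul, hpk]
  calc ‖y - (z.appr 1 : ℚ_[p])‖ * (p:ℝ) ^ (-(k:ℤ))
      ≤ (p:ℝ) ^ (-(1:ℤ)) * (p:ℝ) ^ (-(k:ℤ)) := by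
        apply mul_le_mul_of_nonneg_right hnorm (le_of_lt (zpow_pos (p_posR p) _))
    _ = (p:ℝ) ^ (-((k+1:ℕ):ℤ)) := by
        rw [← zpow_add₀ (ne_of_gt (p_posR p))]
        congr 1
        push_cast
        ring

section Meas

variable [MeasurableSpace ℚ_[p]] [BorelSpace ℚ_[p]]
variable (μ : Measure ℚ_[p]) [μ.IsAddLeftInvariant]

lemma norm_natCast_le_one (i : ℕ) : ‖(i:ℚ_[p])‖ ≤ 1 := by
  have := Padic.norm_int_le_one (p := p) (i : ℤ)
  push_cast at this
  exact this

lemma measure_B_step (k : ℕ) : μ (B p k) = p * μ (B p (k+1)) := by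
  have hmono : (p:ℝ) ^ (-((k+1:ℕ):ℤ)) ≤ (p:ℝ) ^ (-(k:ℤ)) := by
    apply zpow_le_zpow_right₀ (le_of_lt (one_lt_pR p))
    omega
  have hcover : B p k = ⋃ i ∈ Finset.range p,
      (fun x => -((i : ℚ_[p]) * (p:ℚ_[p])^k) + x) ⁻¹' (B p (k+1)) := by
    ext x
    simp only [Set.mem_iUnion, Set.mem_preimage, Finset.mem_range]
    constructor
    · intro hx
      obtain ⟨i, hi, hmem⟩ := exists_residue p hx
      refine ⟨i, hi, ?_⟩
      have h : -((i : ℚ_[p]) * (p:ℚ_[p])^k) + x = x - (i : ℚ_[p]) * (p:ℚ_[p])^k := by ring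
      rw [h]; exact hmem
    · rintro ⟨i, hi, hmem⟩
      have hx : x = (-((i : ℚ_[p]) * (p:ℚ_[p])^k) + x) + (i : ℚ_[p]) * (p:ℚ_[p])^k := by ring
      have h1 : ‖-((i : ℚ_[p]) * (p:ℚ_[p])^k) + x‖ ≤ (p:ℝ) ^ (-(k:ℤ)) := le_trans hmem hmono
      have h2 : ‖(i : ℚ_[p]) * (p:ℚ_[p])^k‖ ≤ (p:ℝ) ^ (-(k:ℤ)) := by
        rw [norm_mul, norm_pow, Padic.norm_p, inv_pow, ← zpow_natCast, ← zpow_neg]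
        calc ‖(i:ℚ_[p])‖ * (p:ℝ) ^ (-(k:ℤ))
            ≤ 1 * (p:ℝ) ^ (-(k:ℤ)) := by
              apply mul_le_mul_of_nonneg_right (norm_natCast_le_one p i)
                (le_of_lt (zpow_pos (p_posR p) _))
          _ = (p:ℝ) ^ (-(k:ℤ)) := one_mul _
      show ‖x‖ ≤ (p:ℝ) ^ (-(k:ℤ))
      rw [hx]
      exact le_trans (Padic.nonarchimedean _ _) (max_le h1 h2)
  have hdisj : (↑(Finset.range p) : Set ℕ).PairwiseDisjoint
      (fun i => (fun x => -((i : ℚ_[p]) * (p:ℚ_[p])^k) + x) ⁻¹' (B p (k+1))) := by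
    intro i hi j hj hij
    simp only [Finset.coe_range, Set.mem_Iio] at hi hj
    rw [Function.onFun, Set.disjoint_left]
    intro x hxi hxj
    simp only [Set.mem_preimage] at hxi hxj
    apply hij
    have hdiff : ‖((i:ℚ_[p]) - j) * (p:ℚ_[p])^k‖ ≤ (p:ℝ) ^ (-((k+1:ℕ):ℤ)) := by
      have h : ((i:ℚ_[p]) - j) * (p:ℚ_[p])^k
          = (-((j : ℚ_[p]) * (p:ℚ_[p])^k) + x) + -(-((i : ℚ_[p]) * (p:ℚ_[p])^k) + x) := by ring
      rw [h]
      refine le_trans (Padic.nonarchimedean _ _) (max_le hxj ?_)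
      rw [norm_neg]
      exact hxi
    have hpk : ‖((p:ℚ_[p])^k)‖ = (p:ℝ) ^ (-(k:ℤ)) := by
      rw [norm_pow, Padic.norm_p, inv_pow, ← zpow_natCast, ← zpow_neg]
    rw [norm_mul, hpk] at hdiff
    have hlt : ‖((i:ℚ_[p]) - j)‖ < 1 := by
      have hpos : (0:ℝ) < (p:ℝ) ^ (-(k:ℤ)) := zpow_pos (p_posR p) _
      have : ‖((i:ℚ_[p]) - j)‖ ≤ (p:ℝ) ^ (-((k+1:ℕ):ℤ)) / (p:ℝ) ^ (-(k:ℤ)) :=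
        (le_div_iff₀ hpos).mpr hdiff
      refine lt_of_le_of_lt this ?_
      rw [div_lt_one hpos]
      apply zpow_lt_zpow_right₀ (one_lt_pR p)
      omega
    have : ((i:ℤ) - j : ℤ) = 0 := by
      have hdvd : (p:ℤ) ∣ (i:ℤ) - j := by
        rw [← Padic.norm_intCast_lt_one_iff]
        push_cast
        exact hlt
      refine Int.eq_zero_of_abs_lt_dvd hdvd ?_
      rw [abs_lt]
      omega
    omega
  have hmeas : ∀ i ∈ Finset.range p, MeasurableSet
      ((fun x => -((i : ℚ_[p]) * (p:ℚ_[p])^k) + x) ⁻¹' (B p (k+1))) := by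
    intro i _
    exact (measurable_const_add _) (measurableSet_B p (k+1))
  rw [hcover, measure_biUnion_finset hdisj hmeas]
  simp only [measure_preimage_add]
  rw [Finset.sum_const, Finset.card_range, nsmul_eq_mul]

lemma measure_B (hO : μ {t : ℚ_[p] | ‖t‖ ≤ 1} = 1) (k : ℕ) :
    μ (B p k) = (p:ℝ≥0∞) ^ (-(k:ℤ)) := by
  have hp0 : (p:ℝ≥0∞) ≠ 0 := by
    simp [hp.out.ne_zero]
  have hpt : (p:ℝ≥0∞) ≠ ⊤ := ENNReal.natCast_ne_top p
  induction k with
  | zero =>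
    have : B p 0 = {t : ℚ_[p] | ‖t‖ ≤ 1} := by
      ext t; simp [B]
    rw [this, hO]
    simp
  | succ k ih =>
    have hstep := measure_B_step p μ k
    rw [ih] at hstep
    have : μ (B p (k+1)) = (p:ℝ≥0∞)⁻¹ * ((p:ℝ≥0∞) * μ (B p (k+1))) := by
      rw [← mul_assoc, ENNReal.inv_mul_cancel hp0 hpt, one_mul]
    rw [this, ← hstep, ← zpow_neg_one, ← ENNReal.zpow_add hp0 hpt]
    congr 1
    push_cast
    ring

lemma B_succ_subset (k : ℕ) : B p (k+1) ⊆ B p k := by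
  intro t ht
  have ht' : ‖t‖ ≤ (p:ℝ) ^ (-((k+1:ℕ):ℤ)) := ht
  show ‖t‖ ≤ (p:ℝ) ^ (-(k:ℤ))
  refine le_trans ht' ?_
  apply zpow_le_zpow_right₀ (le_of_lt (one_lt_pR p))
  omega

lemma pE_ne0 : (p:ℝ≥0∞) ≠ 0 := by simp [hp.out.ne_zero]

lemma pE_ne_top : (p:ℝ≥0∞) ≠ ⊤ := ENNReal.natCast_ne_top p

lemma pzpow_ne_top (n : ℤ) : (p:ℝ≥0∞) ^ n ≠ ⊤ :=
  (ENNReal.zpow_lt_top (pE_ne0 p) (pE_ne_top p) n).ne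

lemma measure_B_ne_top (hO : μ {t : ℚ_[p] | ‖t‖ ≤ 1} = 1) (k : ℕ) : μ (B p k) ≠ ⊤ := by
  rw [measure_B p μ hO k]
  exact pzpow_ne_top p _

lemma measure_S (hO : μ {t : ℚ_[p] | ‖t‖ ≤ 1} = 1) (k : ℕ) :
    μ (S p k) = (p:ℝ≥0∞) ^ (-(k:ℤ)) - (p:ℝ≥0∞) ^ (-((k+1:ℕ):ℤ)) := by
  rw [S_eq, measure_diff (B_succ_subset p k) ((measurableSet_B p (k+1)).nullMeasurableSet)
    (measure_B_ne_top p μ hO (k+1)), measure_B p μ hO, measure_B p μ hO]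

lemma toReal_zpowp (k : ℕ) : ((p:ℝ≥0∞) ^ (-(k:ℤ))).toReal = (p:ℝ) ^ (-(k:ℤ)) := by
  rw [ENNReal.zpow_neg, zpow_natCast, ENNReal.toReal_inv,
    ENNReal.toReal_pow, ENNReal.toReal_natCast, ← zpow_natCast, ← zpow_neg]

lemma measure_S_toReal (hO : μ {t : ℚ_[p] | ‖t‖ ≤ 1} = 1) (k : ℕ) :
    (μ (S p k)).toReal = (p:ℝ) ^ (-(k:ℤ)) - (p:ℝ) ^ (-((k+1:ℕ):ℤ)) := by
  rw [measure_S p μ hO k, ENNReal.toReal_sub_of_le ?hle (pzpow_ne_top p _),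
    toReal_zpowp, toReal_zpowp]
  case hle =>
    apply ENNReal.zpow_le_of_le (by exact_mod_cast hp.out.one_lt.le)
    push_cast
    omega

lemma measure_S_le (k : ℕ) (hO : μ {t : ℚ_[p] | ‖t‖ ≤ 1} = 1) :
    μ (S p k) ≤ (p:ℝ≥0∞) ^ (-(k:ℤ)) := by
  rw [← measure_B p μ hO k]
  exact measure_mono (by rw [S_eq]; exact Set.diff_subset)

lemma measurable_valuation : Measurable (Padic.valuation : ℚ_[p] → ℤ) := by
  apply measurable_to_countable
  intro y
  set n := y.valuation with hn
  have : (Padic.valuation : ℚ_[p] → ℤ) ⁻¹' {n}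
      = {t : ℚ_[p] | ‖t‖ = (p:ℝ) ^ (-n)} ∪ (if n = 0 then {(0:ℚ_[p])} else ∅) := by
    ext t
    by_cases ht : t = 0
    · subst ht
      simp only [Set.mem_preimage, Set.mem_singleton_iff, Padic.valuation_zero,
        Set.mem_union, Set.mem_setOf_eq, norm_zero]
      constructor
      · intro h
        right
        simp [← h]
      · rintro (h | h)
        · exfalso
          have : (0:ℝ) < (p:ℝ) ^ (-n) := zpow_pos (p_posR p) _
          rw [← h] at this
          exact lt_irrefl _ this
        · by_cases h0 : n = 0
          · omega
          · simp [h0] at h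
    · simp only [Set.mem_preimage, Set.mem_singleton_iff, Set.mem_union, Set.mem_setOf_eq,
        Padic.norm_eq_zpow_neg_valuation ht]
      constructor
      · intro h
        left
        rw [h]
      · rintro (h | h)
        · have := zpow_right_injective₀ (p_posR p) (ne_of_gt (one_lt_pR p)) h
          omega
        · by_cases h0 : n = 0 <;> simp [h0] at h <;> exact absurd h ht
    
  rw [this]
  apply MeasurableSet.union
  · exact measurable_norm (measurableSet_singleton _)
  · by_cases h0 : n = 0 <;> simp [h0]

end Meas

lemma norm_p_pow_nat (k : ℕ) : ‖((p:ℚ_[p])^k)‖ = (p:ℝ) ^ (-(k:ℤ)) := by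
  rw [norm_pow, Padic.norm_p, inv_pow, ← zpow_natCast, ← zpow_neg]

lemma chi_pow (χ : ℚ_[p] → ℂ)
    (hmul : ∀ x y : ℚ_[p], x ≠ 0 → y ≠ 0 → χ (x*y) = χ x * χ y)
    (hunr : ∀ x : ℚ_[p], ‖x‖ = 1 → χ x = 1) (k : ℕ) :
    χ ((p:ℚ_[p])^k) = (χ (p:ℚ_[p]))^k := by
  induction k with
  | zero => simpa using hunr 1 norm_one
  | succ k ih =>
    rw [pow_succ, hmul _ _ (pow_ne_zero _ (pQ_ne p)) (pQ_ne p), ih, pow_succ]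

lemma chi_on_S (χ : ℚ_[p] → ℂ)
    (hmul : ∀ x y : ℚ_[p], x ≠ 0 → y ≠ 0 → χ (x*y) = χ x * χ y)
    (hunr : ∀ x : ℚ_[p], ‖x‖ = 1 → χ x = 1) (k : ℕ) {t : ℚ_[p]} (ht : t ∈ S p k) :
    χ t = (χ (p:ℚ_[p]))^k := by
  have ht0 : t ≠ 0 := ne_zero_of_mem_S p ht
  have hpk0 : ((p:ℚ_[p])^k) ≠ 0 := pow_ne_zero _ (pQ_ne p)
  have hu0 : t / (p:ℚ_[p])^k ≠ 0 := div_ne_zero ht0 hpk0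
  have hu : ‖t / (p:ℚ_[p])^k‖ = 1 := by
    rw [norm_div, norm_p_pow_nat p k, ht, div_self (ne_of_gt (zpow_pos (p_posR p) _))]
  have heq : t = (p:ℚ_[p])^k * (t / (p:ℚ_[p])^k) := by field_simp
  calc χ t = χ ((p:ℚ_[p])^k * (t / (p:ℚ_[p])^k)) := by rw [← heq]
    _ = χ ((p:ℚ_[p])^k) * χ (t / (p:ℚ_[p])^k) := hmul _ _ hpk0 hu0
    _ = (χ (p:ℚ_[p]))^k := by rw [chi_pow p χ hmul hunr, hunr _ hu, mul_one]


lemma zpow_neg_nat (x : ℝ) (m : ℕ) : x ^ (-(m:ℤ)) = (x⁻¹) ^ m := by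
  rw [zpow_neg, zpow_natCast, inv_pow]

section Series

variable [MeasurableSpace ℚ_[p]] [BorelSpace ℚ_[p]]
variable (μ : Measure ℚ_[p]) [μ.IsAddLeftInvariant]

lemma measurableSet_PU : MeasurableSet (⋃ k : ℕ, S p (k+1)) :=
  MeasurableSet.iUnion fun k => measurableSet_S p (k+1)

lemma pairwise_S : Pairwise (Function.onFun Disjoint fun k : ℕ => S p (k+1)) := by
  intro i j hij
  rw [Function.onFun, Set.disjoint_left]
  intro t hti htj
  have h1 := (mem_S_iff p (ne_zero_of_mem_S p hti)).mp hti
  have h2 := (mem_S_iff p (ne_zero_of_mem_S p htj)).mp htj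
  apply hij
  omega

variable (χ : ℚ_[p] → ℂ)

lemma norm_c_lt_one (hconv : ‖χ (p:ℚ_[p])‖ < p) : ‖(p:ℂ)⁻¹ * χ (p:ℚ_[p])‖ < 1 := by
  rw [norm_mul, norm_inv, Complex.norm_natCast, inv_mul_eq_div, div_lt_one (p_posR p)]
  exact hconv

lemma integrableOn_PU
    (hmul : ∀ x y : ℚ_[p], x ≠ 0 → y ≠ 0 → χ (x*y) = χ x * χ y)
    (hunr : ∀ x : ℚ_[p], ‖x‖ = 1 → χ x = 1)
    (hconv : ‖χ (p:ℚ_[p])‖ < p)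
    (hO : μ {t : ℚ_[p] | ‖t‖ ≤ 1} = 1) :
    IntegrableOn χ (⋃ k : ℕ, S p (k+1)) μ := by
  have hUmeas := measurableSet_PU p
  set g : ℚ_[p] → ℂ := fun t => (χ (p:ℚ_[p])) ^ (t.valuation.toNat) with hg
  have hgmeas : Measurable g := by
    exact (measurable_from_top (f := fun n : ℤ => (χ (p:ℚ_[p]))^n.toNat)).comp
      (measurable_valuation p)
  have hEq : ∀ t ∈ ⋃ k : ℕ, S p (k+1), χ t = g t := by
    intro t ht
    rw [Set.mem_iUnion] at ht
    obtain ⟨k, hk⟩ := ht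
    have hv := (mem_S_iff p (ne_zero_of_mem_S p hk)).mp hk
    rw [chi_on_S p χ hmul hunr (k+1) hk, hg]
    simp only
    rw [hv]
    simp
  refine ⟨(hgmeas.aestronglyMeasurable).congr ?_, ?_⟩
  · exact (ae_restrict_iff' hUmeas).2 (ae_of_all _ fun t ht => (hEq t ht).symm)
  · show (∫⁻ a, ‖χ a‖₊ ∂(μ.restrict (⋃ k : ℕ, S p (k+1)))) < ⊤
    set a : ℝ≥0∞ := (‖χ (p:ℚ_[p])‖₊ : ℝ≥0∞) * (p:ℝ≥0∞)⁻¹ with ha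
    have ha1 : a < 1 := by
      rw [ha, ← div_eq_mul_inv,
        ENNReal.div_lt_iff (Or.inl (pE_ne0 p)) (Or.inl (pE_ne_top p)), one_mul]
      exact_mod_cast hconv
    have hstep : ∀ k : ℕ, (∫⁻ t in S p (k+1), ‖χ t‖₊ ∂μ) ≤ a ^ (k+1) := by
      intro k
      have hc : ∀ t ∈ S p (k+1), ((‖χ t‖₊ : ℝ≥0∞)) = ((‖χ (p:ℚ_[p])‖₊ : ℝ≥0∞))^(k+1) := by
        intro t ht
        rw [chi_on_S p χ hmul hunr (k+1) ht]
        push_cast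
        rw [nnnorm_pow]
        push_cast
        ring
      rw [setLIntegral_congr_fun (measurableSet_S p (k+1)) hc,
        setLIntegral_const]
      calc ((‖χ (p:ℚ_[p])‖₊ : ℝ≥0∞))^(k+1) * μ (S p (k+1))
          ≤ ((‖χ (p:ℚ_[p])‖₊ : ℝ≥0∞))^(k+1) * ((p:ℝ≥0∞)⁻¹)^(k+1) := by
            apply mul_le_mul_right
            rw [← ENNReal.inv_pow, ← zpow_natCast (p:ℝ≥0∞),
              ← ENNReal.zpow_neg]
            exact measure_S_le p μ (k+1) hO
        _ = a ^ (k+1) := by rw [ha, mul_pow]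
    calc (∫⁻ a, ‖χ a‖₊ ∂(μ.restrict (⋃ k : ℕ, S p (k+1))))
        = ∑' k : ℕ, ∫⁻ t in S p (k+1), ‖χ t‖₊ ∂μ :=
          lintegral_iUnion (fun k => measurableSet_S p (k+1)) (pairwise_S p) _
      _ ≤ ∑' k : ℕ, a ^ (k+1) := ENNReal.tsum_le_tsum hstep
      _ = a * ∑' k : ℕ, a ^ k := by
          rw [← ENNReal.tsum_mul_left]
          congr 1
          funext k
          rw [pow_succ']
      _ < ⊤ := by
          rw [ENNReal.tsum_geometric]
          apply ENNReal.mul_lt_top (lt_trans ha1 one_lt_top)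
          rw [ENNReal.inv_lt_top]
          exact tsub_pos_of_lt ha1

lemma integral_PU
    (hmul : ∀ x y : ℚ_[p], x ≠ 0 → y ≠ 0 → χ (x*y) = χ x * χ y)
    (hunr : ∀ x : ℚ_[p], ‖x‖ = 1 → χ x = 1)
    (hconv : ‖χ (p:ℚ_[p])‖ < p)
    (hO : μ {t : ℚ_[p] | ‖t‖ ≤ 1} = 1) :
    ∫ t in ⋃ k : ℕ, S p (k+1), χ t ∂μ
      = ((1 - (p:ℂ)⁻¹) * ((p:ℂ)⁻¹ * χ (p:ℚ_[p]))) * (1 - (p:ℂ)⁻¹ * χ (p:ℚ_[p]))⁻¹ := by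
  rw [integral_iUnion (fun k => measurableSet_S p (k+1)) (pairwise_S p)
    (integrableOn_PU p μ χ hmul hunr hconv hO)]
  have hterm : ∀ k : ℕ, ∫ t in S p (k+1), χ t ∂μ
      = ((1 - (p:ℂ)⁻¹) * ((p:ℂ)⁻¹ * χ (p:ℚ_[p]))) * ((p:ℂ)⁻¹ * χ (p:ℚ_[p]))^k := by
    intro k
    rw [setIntegral_congr_fun (measurableSet_S p (k+1))
      (fun t ht => chi_on_S p χ hmul hunr (k+1) ht),
      setIntegral_const, measureReal_def, measure_S_toReal p μ hO (k+1)]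
    rw [zpow_neg_nat, zpow_neg_nat]
    rw [Complex.real_smul]
    push_cast
    ring
  rw [tsum_congr hterm, tsum_mul_left, tsum_geometric_of_norm_lt_one (norm_c_lt_one p χ hconv)]

end Series

lemma norm_one_add_of_norm_lt_one {t : ℚ_[p]} (h : ‖t‖ < 1) : ‖1 + t‖ = 1 := by
  rw [Padic.add_eq_max_of_ne (by rw [norm_one]; exact (ne_of_lt h).symm), norm_one]
  exact max_eq_left h.le

lemma norm_eq_one_of_norm_one_add_lt {t : ℚ_[p]} (h : ‖1 + t‖ < 1) : ‖t‖ = 1 := by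
  have heq : t = (1 + t) + (-1) := by ring
  rw [heq, Padic.add_eq_max_of_ne (by rw [norm_neg, norm_one]; exact ne_of_lt h),
    norm_neg, norm_one]
  exact max_eq_right h.le

lemma mem_PU_iff {t : ℚ_[p]} : t ∈ (⋃ k : ℕ, S p (k+1)) ↔ t ≠ 0 ∧ ‖t‖ < 1 := by
  constructor
  · intro ht
    rw [Set.mem_iUnion] at ht
    obtain ⟨k, hk⟩ := ht
    have ht0 := ne_zero_of_mem_S p hk
    refine ⟨ht0, ?_⟩
    have hn : ‖t‖ = (p:ℝ) ^ (-((k+1:ℕ):ℤ)) := hk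
    rw [hn, show (1:ℝ) = (p:ℝ) ^ (0:ℤ) from (zpow_zero _).symm]
    apply zpow_lt_zpow_right₀ (one_lt_pR p)
    push_cast
    omega
  · rintro ⟨ht0, hlt⟩
    have hv : 1 ≤ t.valuation := by
      rw [Padic.norm_eq_zpow_neg_valuation ht0, show (1:ℝ) = (p:ℝ) ^ (0:ℤ) from (zpow_zero _).symm,
        zpow_lt_zpow_iff_right₀ (one_lt_pR p)] at hlt
      omega
    refine Set.mem_iUnion.mpr ⟨t.valuation.toNat - 1, (mem_S_iff p ht0).mpr ?_⟩
    omega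

lemma mem_B1_of_norm_lt_one {t : ℚ_[p]} (h : ‖t‖ < 1) : t ∈ B p 1 := by
  by_cases ht0 : t = 0
  · subst ht0; exact zero_mem_B p 1
  · rw [mem_B_iff p ht0]
    rw [Padic.norm_eq_zpow_neg_valuation ht0, show (1:ℝ) = (p:ℝ) ^ (0:ℤ) from (zpow_zero _).symm,
      zpow_lt_zpow_iff_right₀ (one_lt_pR p)] at h
    omega

lemma norm_lt_one_of_mem_B1 {t : ℚ_[p]} (h : t ∈ B p 1) : ‖t‖ < 1 := by
  have h' : ‖t‖ ≤ (p:ℝ) ^ (-((1:ℕ):ℤ)) := h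
  refine lt_of_le_of_lt h' ?_
  rw [show (1:ℝ) = (p:ℝ) ^ (0:ℤ) from (zpow_zero _).symm]
  apply zpow_lt_zpow_right₀ (one_lt_pR p)
  omega

end Stmt2Aux

open Stmt2Aux ENNReal in
/-- Let `F = ℚ_[p]` with ring of integers `O`, residue cardinality `q = p`,
uniformizer `p`, Haar measure with `vol(O) = 1`.  Let `χ, χ'` be unramified characters of `F^*`
with the absolute-convergence bounds `|χ(p)| q⁻¹ < 1` and `|χ'(p)| q⁻¹ < 1`.  Then
`1 + q ∫_{O∖{0,-1}} χ(t) χ'(1+t) dt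
  = (q - 1) (1 - q⁻² (χχ')(p)) / ((1 - q⁻¹ χ(p))(1 - q⁻¹ χ'(p)))`. -/
theorem stmt2 (p : ℕ) [Fact p.Prime]
    [MeasurableSpace ℚ_[p]] [BorelSpace ℚ_[p]]
    (μ : Measure ℚ_[p]) [μ.IsAddLeftInvariant]
    (hO : μ {t : ℚ_[p] | ‖t‖ ≤ 1} = 1)
    (χ χ' : ℚ_[p] → ℂ)
    (hmul : ∀ x y : ℚ_[p], x ≠ 0 → y ≠ 0 → χ (x * y) = χ x * χ y)
    (hmul' : ∀ x y : ℚ_[p], x ≠ 0 → y ≠ 0 → χ' (x * y) = χ' x * χ' y)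
    (hunr : ∀ x : ℚ_[p], ‖x‖ = 1 → χ x = 1)
    (hunr' : ∀ x : ℚ_[p], ‖x‖ = 1 → χ' x = 1)
    (hconv : ‖χ (p : ℚ_[p])‖ < p) (hconv' : ‖χ' (p : ℚ_[p])‖ < p) :
    1 + (p : ℂ) * ∫ t in {t : ℚ_[p] | ‖t‖ ≤ 1 ∧ t ≠ 0 ∧ t ≠ -1}, χ t * χ' (1 + t) ∂μ =
      ((p : ℂ) - 1) * (1 - ((p : ℂ) ^ 2)⁻¹ * (χ (p : ℚ_[p]) * χ' (p : ℚ_[p]))) /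
        ((1 - (p : ℂ)⁻¹ * χ (p : ℚ_[p])) * (1 - (p : ℂ)⁻¹ * χ' (p : ℚ_[p]))) := by
  have hp := Fact.out (p := p.Prime)
  set PU : Set ℚ_[p] := ⋃ k : ℕ, Stmt2Aux.S p (k+1) with hPU
  set Q : Set ℚ_[p] := (fun t => 1 + t) ⁻¹' PU with hQdef
  set U : Set ℚ_[p] := {t : ℚ_[p] | ‖t‖ = 1 ∧ ‖1+t‖ = 1} with hUdef
  have hmPU : MeasurableSet PU := measurableSet_PU p
  have hmQ : MeasurableSet Q := (measurable_const_add 1) hmPU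
  have hmU : MeasurableSet U := by
    rw [hUdef]
    have h1 : MeasurableSet {t : ℚ_[p] | ‖t‖ = 1} :=
      measurable_norm (measurableSet_singleton 1)
    have h2 : MeasurableSet {t : ℚ_[p] | ‖1+t‖ = 1} :=
      (measurable_norm.comp (measurable_const_add 1)) (measurableSet_singleton 1)
    exact h1.inter h2
  -- membership facts
  have hQmem : ∀ t : ℚ_[p], t ∈ Q ↔ (1 + t ≠ 0 ∧ ‖1 + t‖ < 1) := by
    intro t
    rw [hQdef, Set.mem_preimage, hPU, mem_PU_iff p]
  have hPUmem : ∀ t : ℚ_[p], t ∈ PU ↔ (t ≠ 0 ∧ ‖t‖ < 1) := fun t => mem_PU_iff p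
  -- set decomposition
  have hsetEq : {t : ℚ_[p] | ‖t‖ ≤ 1 ∧ t ≠ 0 ∧ t ≠ -1} = (PU ∪ Q) ∪ U := by
    ext t
    simp only [Set.mem_setOf_eq, Set.mem_union]
    constructor
    · rintro ⟨h1, h2, h3⟩
      by_cases hlt : ‖t‖ < 1
      · exact Or.inl (Or.inl ((hPUmem t).mpr ⟨h2, hlt⟩))
      · have hteq : ‖t‖ = 1 := le_antisymm h1 (not_lt.mp hlt)
        by_cases hlt' : ‖1+t‖ < 1
        · refine Or.inl (Or.inr ((hQmem t).mpr ⟨?_, hlt'⟩))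
          intro h
          apply h3
          linear_combination h - (1:ℚ_[p]) * 1
        · refine Or.inr ⟨hteq, le_antisymm ?_ (not_lt.mp hlt')⟩
          calc ‖1+t‖ ≤ max ‖(1:ℚ_[p])‖ ‖t‖ := Padic.nonarchimedean 1 t
            _ = 1 := by rw [norm_one, hteq, max_self]
    · rintro ((hm | hm) | hm)
      · obtain ⟨h0, hlt⟩ := (hPUmem t).mp hm
        refine ⟨hlt.le, h0, ?_⟩
        intro h
        rw [h, norm_neg, norm_one] at hlt
        exact lt_irrefl _ hlt
      · obtain ⟨h0, hlt⟩ := (hQmem t).mp hm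
        have hteq : ‖t‖ = 1 := norm_eq_one_of_norm_one_add_lt p hlt
        refine ⟨hteq.le, ?_, ?_⟩
        · intro h; rw [h, norm_zero] at hteq; norm_num at hteq
        · intro h; apply h0; rw [h]; ring
      · obtain ⟨h1, h2⟩ := hm
        refine ⟨h1.le, ?_, ?_⟩
        · intro h; rw [h, norm_zero] at h1; norm_num at h1
        · intro h
          rw [h] at h2
          norm_num at h2
  -- disjointness
  have hd1 : Disjoint PU Q := by
    rw [Set.disjoint_left]
    intro t ht1 ht2
    have hlt := ((hPUmem t).mp ht1).2
    have hlt' := ((hQmem t).mp ht2).2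
    rw [norm_one_add_of_norm_lt_one p hlt] at hlt'
    exact lt_irrefl _ hlt'
  have hd2 : Disjoint (PU ∪ Q) U := by
    rw [Set.disjoint_left]
    rintro t (ht | ht) htU
    · have hlt := ((hPUmem t).mp ht).2
      rw [htU.1] at hlt
      exact lt_irrefl _ hlt
    · have hlt := ((hQmem t).mp ht).2
      rw [htU.2] at hlt
      exact lt_irrefl _ hlt
  -- integrand congruences
  have hfPU : Set.EqOn χ (fun t => χ t * χ' (1 + t)) PU := by
    intro t ht
    have hlt := ((hPUmem t).mp ht).2
    simp only
    rw [hunr' _ (norm_one_add_of_norm_lt_one p hlt), mul_one]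
  have hfQ : Set.EqOn (χ' ∘ (fun t => (1:ℚ_[p]) + t)) (fun t => χ t * χ' (1 + t)) Q := by
    intro t ht
    have hlt := ((hQmem t).mp ht).2
    simp only [Function.comp_apply]
    rw [hunr _ (norm_eq_one_of_norm_one_add_lt p hlt), one_mul]
  have hfU : Set.EqOn (fun _ => (1:ℂ)) (fun t => χ t * χ' (1 + t)) U := by
    intro t ht
    simp only
    rw [hunr _ ht.1, hunr' _ ht.2, mul_one]
  -- integrability
  have hIPUχ := integrableOn_PU p μ χ hmul hunr hconv hO
  have hIPUχ' := integrableOn_PU p μ χ' hmul' hunr' hconv' hO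
  have hIPU : IntegrableOn (fun t => χ t * χ' (1 + t)) PU μ :=
    hIPUχ.congr_fun hfPU hmPU
  have hmp : MeasurePreserving (fun x => (1:ℚ_[p]) + x) μ μ := measurePreserving_add_left μ 1
  have hemb : MeasurableEmbedding (fun x => (1:ℚ_[p]) + x) :=
    (Homeomorph.addLeft (1:ℚ_[p])).measurableEmbedding
  have hIQcomp : IntegrableOn (χ' ∘ (fun t => (1:ℚ_[p]) + t)) Q μ := by
    have h1 : IntegrableOn χ' PU (Measure.map (fun x => (1:ℚ_[p]) + x) μ) := by
      rw [hmp.map_eq]; exact hIPUχ'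
    exact hemb.integrableOn_map_iff.mp h1
  have hIQ : IntegrableOn (fun t => χ t * χ' (1 + t)) Q μ :=
    hIQcomp.congr_fun hfQ hmQ
  -- measure of U
  have hUsub : U ⊆ {t : ℚ_[p] | ‖t‖ ≤ 1} := fun t ht => le_of_eq ht.1
  have hμUfin : μ U ≠ ⊤ := by
    refine ne_top_of_le_ne_top ?_ (measure_mono hUsub)
    rw [hO]; exact one_ne_top
  have hIU : IntegrableOn (fun t => χ t * χ' (1 + t)) U μ := by
    refine (integrableOn_const hμUfin).congr_fun hfU hmU
  -- measure of U value
  set D : Set ℚ_[p] := (fun t => 1 + t) ⁻¹' (B p 1) with hDdef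
  have hmB1 : MeasurableSet (B p 1) := measurableSet_B p 1
  have hmD : MeasurableSet D := (measurable_const_add 1) hmB1
  have hcover : {t : ℚ_[p] | ‖t‖ ≤ 1} = (B p 1 ∪ D) ∪ U := by
    ext t
    simp only [Set.mem_setOf_eq, Set.mem_union, hDdef, Set.mem_preimage]
    constructor
    · intro h1
      by_cases hlt : ‖t‖ < 1
      · exact Or.inl (Or.inl (mem_B1_of_norm_lt_one p hlt))
      · have hteq : ‖t‖ = 1 := le_antisymm h1 (not_lt.mp hlt)
        by_cases hlt' : ‖1+t‖ < 1
        · exact Or.inl (Or.inr (mem_B1_of_norm_lt_one p hlt'))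
        · refine Or.inr ⟨hteq, le_antisymm ?_ (not_lt.mp hlt')⟩
          calc ‖1+t‖ ≤ max ‖(1:ℚ_[p])‖ ‖t‖ := Padic.nonarchimedean 1 t
            _ = 1 := by rw [norm_one, hteq, max_self]
    · rintro ((hm | hm) | hm)
      · exact (norm_lt_one_of_mem_B1 p hm).le
      · exact (norm_eq_one_of_norm_one_add_lt p (norm_lt_one_of_mem_B1 p hm)).le
      · exact hm.1.le
  have hdB1D : Disjoint (B p 1) D := by
    rw [Set.disjoint_left]
    intro t ht1 ht2
    have hlt := norm_lt_one_of_mem_B1 p ht1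
    have hlt' := norm_lt_one_of_mem_B1 p (ht2 : 1 + t ∈ B p 1)
    rw [norm_one_add_of_norm_lt_one p hlt] at hlt'
    exact lt_irrefl _ hlt'
  have hdBU : Disjoint (B p 1 ∪ D) U := by
    rw [Set.disjoint_left]
    rintro t (ht | ht) htU
    · have := norm_lt_one_of_mem_B1 p ht
      rw [htU.1] at this
      exact lt_irrefl _ this
    · have := norm_lt_one_of_mem_B1 p (ht : 1 + t ∈ B p 1)
      rw [htU.2] at this
      exact lt_irrefl _ this
  have hμD : μ D = μ (B p 1) := measure_preimage_add μ 1 (B p 1)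
  have hμB1 : μ (B p 1) = (p:ℝ≥0∞) ^ (-((1:ℕ):ℤ)) := measure_B p μ hO 1
  have hμeq : μ (B p 1) + μ D + μ U = 1 := by
    rw [← hO, hcover, measure_union hdBU hmU, measure_union hdB1D hmD]
  have hμU : (μ U).toReal = 1 - 2 * (p:ℝ)⁻¹ := by
    have hfin1 : μ (B p 1) ≠ ⊤ := measure_B_ne_top p μ hO 1
    have hfinD : μ D ≠ ⊤ := by rw [hμD]; exact hfin1
    have := congrArg ENNReal.toReal hμeq
    rw [ENNReal.toReal_add (by exact ENNReal.add_ne_top.mpr ⟨hfin1, hfinD⟩) hμUfin,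
      ENNReal.toReal_add hfin1 hfinD, ENNReal.toReal_one, hμD, hμB1, toReal_zpowp,
      zpow_neg_nat, pow_one] at this
    linarith
  -- integral values
  have hintPU : ∫ t in PU, χ t * χ' (1 + t) ∂μ
      = ((1 - (p:ℂ)⁻¹) * ((p:ℂ)⁻¹ * χ (p:ℚ_[p]))) * (1 - (p:ℂ)⁻¹ * χ (p:ℚ_[p]))⁻¹ := by
    rw [← setIntegral_congr_fun hmPU hfPU]
    exact integral_PU p μ χ hmul hunr hconv hO
  have hintQ : ∫ t in Q, χ t * χ' (1 + t) ∂μ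
      = ((1 - (p:ℂ)⁻¹) * ((p:ℂ)⁻¹ * χ' (p:ℚ_[p]))) * (1 - (p:ℂ)⁻¹ * χ' (p:ℚ_[p]))⁻¹ := by
    rw [← setIntegral_congr_fun hmQ hfQ]
    have := hmp.setIntegral_preimage_emb hemb χ' PU
    rw [hQdef]
    calc ∫ t in (fun t => (1:ℚ_[p]) + t) ⁻¹' PU, (χ' ∘ (fun t => (1:ℚ_[p]) + t)) t ∂μ
        = ∫ t in PU, χ' t ∂μ := this
      _ = _ := integral_PU p μ χ' hmul' hunr' hconv' hO
  have hintU : ∫ t in U, χ t * χ' (1 + t) ∂μ = ((1 - 2 * (p:ℝ)⁻¹ : ℝ) : ℂ) := by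
    rw [← setIntegral_congr_fun hmU hfU, setIntegral_const, measureReal_def, hμU]
    simp
  -- assemble
  rw [hsetEq, setIntegral_union hd2 hmU (hIPU.union hIQ) hIU,
    setIntegral_union hd1 hmQ hIPU hIQ, hintPU, hintQ, hintU]
  -- final algebra
  have hp0C : (p:ℂ) ≠ 0 := Nat.cast_ne_zero.mpr hp.ne_zero
  have h1c : (1:ℂ) - (p:ℂ)⁻¹ * χ (p:ℚ_[p]) ≠ 0 := by
    intro h
    have h2 := norm_c_lt_one p χ hconv
    rw [sub_eq_zero] at h
    rw [← h, norm_one] at h2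
    exact lt_irrefl _ h2
  have h1c' : (1:ℂ) - (p:ℂ)⁻¹ * χ' (p:ℚ_[p]) ≠ 0 := by
    intro h
    have h2 := norm_c_lt_one p χ' hconv'
    rw [sub_eq_zero] at h
    rw [← h, norm_one] at h2
    exact lt_irrefl _ h2
  have hrw : ((p:ℂ)^2)⁻¹ * (χ (p:ℚ_[p]) * χ' (p:ℚ_[p]))
      = ((p:ℂ)⁻¹ * χ (p:ℚ_[p])) * ((p:ℂ)⁻¹ * χ' (p:ℚ_[p])) := by
    rw [sq, mul_inv]
    ring
  rw [hrw]
  push_cast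
  generalize hx : (p:ℂ)⁻¹ * χ (p:ℚ_[p]) = x at h1c ⊢
  generalize hy : (p:ℂ)⁻¹ * χ' (p:ℚ_[p]) = y at h1c' ⊢
  field_simp [h1c, h1c', hp0C]
  ring
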